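/- Let k be a field of characteristic 3. For every λ ∈ k×, the plane cubic C_λ: x³ + y³ + z³ − λxyz = 0 is smooth, its set of inflection points is {[1,−1,0], [1,0,−1], [0,1,−1]}, and its inflection lines are exactly the three lines x = 0, y = 0, z = 0. In particular, all the curves C_λ (λ ∈ k×) share the same inflection points and the same inflection lines, so a smooth plane cubic in characteristic 3 cannot be recovered from its inflection lines even together with its inflection points. -/

import Mathlib

/-!
STATEMENT 18 (Pacini–Testa, Section 4): in characteristic 3 the reconstruction problem
fails.  Over a field `k` with `char k = 3`, for every `λ ∈ k×` the plane cubic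
`C_λ : x³ + y³ + z³ − λ·xyz = 0` is smooth, its inflection points (computed
geometrically, i.e. over the algebraic closure) are exactly the three points
`[1,−1,0], [1,0,−1], [0,1,−1]`, and its inflection lines are exactly the three
coordinate lines `x = 0`, `y = 0`, `z = 0`.  In particular any two of the curves `C_λ`
share the same inflection points and inflection lines, while being distinct curves, so
a smooth plane cubic in characteristic 3 cannot be recovered from its inflection lines
and inflection points.
-/

open MvPolynomial Polynomial

noncomputable section

namespace Infl

variable {K : Type*} [Field K]

def dotv (w p : Fin 3 → K) : K := ∑ i, w i * p i

def lineRestrict (F : MvPolynomial (Fin 3) K) (a b : Fin 3 → K) : Polynomial K :=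
  MvPolynomial.aeval (fun i => Polynomial.C (a i) + Polynomial.C (b i) * Polynomial.X) F

def contactAt (F : MvPolynomial (Fin 3) K) (a b : Fin 3 → K) : ℕ :=
  (lineRestrict F a b).rootMultiplicity 0

def IsSmoothCurve (F : MvPolynomial (Fin 3) K) (d : ℕ) : Prop :=
  F.IsHomogeneous d ∧ F ≠ 0 ∧
    ∀ p : Fin 3 → K, p ≠ 0 → eval p F = 0 → ∃ i, eval p (pderiv i F) ≠ 0

/-- `w` is (a dual vector of) an inflection line of `{F = 0}`: it meets the curve at
some point with intersection multiplicity at least 3 and is not a component. -/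
def IsInflLine (F : MvPolynomial (Fin 3) K) (w : Fin 3 → K) : Prop :=
  w ≠ 0 ∧ ∃ a b : Fin 3 → K, dotv w a = 0 ∧ dotv w b = 0 ∧
    LinearIndependent K ![a, b] ∧ lineRestrict F a b ≠ 0 ∧ 3 ≤ contactAt F a b

/-- `p` is an inflection point of `{F = 0}`: some line meets the curve at `p` with
intersection multiplicity at least 3 (and is not a component). -/
def IsInflPoint (F : MvPolynomial (Fin 3) K) (p : Fin 3 → K) : Prop :=
  eval p F = 0 ∧ ∃ b : Fin 3 → K, LinearIndependent K ![p, b] ∧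
    lineRestrict F p b ≠ 0 ∧ 3 ≤ contactAt F p b

/-- Proportionality of vectors (equality in the projective plane). -/
def propor (p q : Fin 3 → K) : Prop := ∃ c : K, c ≠ 0 ∧ p = c • q

variable {k : Type*} [Field k]

def bar (F : MvPolynomial (Fin 3) k) : MvPolynomial (Fin 3) (AlgebraicClosure k) :=
  MvPolynomial.map (algebraMap k (AlgebraicClosure k)) F

/-- The Hesse-type cubic `x³ + y³ + z³ − λ·xyz`. -/
def hesseCubic (lam : k) : MvPolynomial (Fin 3) k :=
  X 0 ^ 3 + X 1 ^ 3 + X 2 ^ 3 - MvPolynomial.C lam * (X 0 * X 1 * X 2)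

/-! ### Auxiliary lemmas -/

section Aux

variable {K : Type*} [Field K]

lemma eval_hesse (μ : K) (p : Fin 3 → K) :
    eval p (hesseCubic μ) = p 0 ^ 3 + p 1 ^ 3 + p 2 ^ 3 - μ * (p 0 * p 1 * p 2) := by
  simp [hesseCubic]

set_option maxHeartbeats 1000000 in
lemma lr_expand (μ : K) (a b : Fin 3 → K) :
    lineRestrict (hesseCubic μ) a b =
      Polynomial.C (a 0 ^ 3 + a 1 ^ 3 + a 2 ^ 3 - μ * (a 0 * a 1 * a 2))
      + Polynomial.C (3 * (a 0 ^ 2 * b 0 + a 1 ^ 2 * b 1 + a 2 ^ 2 * b 2)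
          - μ * (a 1 * a 2 * b 0 + a 0 * a 2 * b 1 + a 0 * a 1 * b 2)) * Polynomial.X
      + Polynomial.C (3 * (a 0 * b 0 ^ 2 + a 1 * b 1 ^ 2 + a 2 * b 2 ^ 2)
          - μ * (a 0 * b 1 * b 2 + a 1 * b 0 * b 2 + a 2 * b 0 * b 1)) * Polynomial.X ^ 2
      + Polynomial.C (b 0 ^ 3 + b 1 ^ 3 + b 2 ^ 3 - μ * (b 0 * b 1 * b 2)) * Polynomial.X ^ 3 := by
  simp only [lineRestrict, hesseCubic, map_add, map_sub, map_mul, map_pow,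
    MvPolynomial.aeval_X, MvPolynomial.aeval_C, Polynomial.algebraMap_eq, map_ofNat]
  ring

lemma pderiv_eval0 (μ : K) (p : Fin 3 → K) :
    eval p (pderiv 0 (hesseCubic μ)) = 3 * p 0 ^ 2 - μ * (p 1 * p 2) := by
  simp only [hesseCubic, map_sub, map_add, pderiv_mul, pderiv_pow, pderiv_X, pderiv_C]
  simp [Pi.single_apply]

lemma pderiv_eval1 (μ : K) (p : Fin 3 → K) :
    eval p (pderiv 1 (hesseCubic μ)) = 3 * p 1 ^ 2 - μ * (p 0 * p 2) := by
  simp only [hesseCubic, map_sub, map_add, pderiv_mul, pderiv_pow, pderiv_X, pderiv_C]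
  simp [Pi.single_apply]

lemma pderiv_eval2 (μ : K) (p : Fin 3 → K) :
    eval p (pderiv 2 (hesseCubic μ)) = 3 * p 2 ^ 2 - μ * (p 0 * p 1) := by
  simp only [hesseCubic, map_sub, map_add, pderiv_mul, pderiv_pow, pderiv_X, pderiv_C]
  simp [Pi.single_apply]

lemma vec_eq_zero {p : Fin 3 → K} (h0 : p 0 = 0) (h1 : p 1 = 0) (h2 : p 2 = 0) : p = 0 := by
  funext i; fin_cases i <;> assumption

lemma hesse_homog (μ : K) : (hesseCubic μ : MvPolynomial (Fin 3) K).IsHomogeneous 3 := by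
  have hX : ∀ i : Fin 3, ((X i : MvPolynomial (Fin 3) K)).IsHomogeneous 1 :=
    fun i => isHomogeneous_X K i
  refine MvPolynomial.IsHomogeneous.sub ?_ ?_
  · exact (((hX 0).pow 3).add ((hX 1).pow 3)).add ((hX 2).pow 3)
  · have := (isHomogeneous_C (Fin 3) μ).mul (((hX 0).mul (hX 1)).mul (hX 2))
    simpa using this

lemma hesse_ne_zero (μ : K) : (hesseCubic μ : MvPolynomial (Fin 3) K) ≠ 0 := by
  intro h
  have := eval_hesse μ ![1, 0, 0]
  rw [h] at this
  simp at this

lemma hesse_smooth (μ : K) (hμ : μ ≠ 0) (h3 : (3 : K) = 0) :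
    IsSmoothCurve (hesseCubic μ) 3 := by
  refine ⟨hesse_homog μ, hesse_ne_zero μ, ?_⟩
  intro p hp h0
  by_contra h
  push_neg at h
  have e0 : p 1 * p 2 = 0 := by
    have h' := h 0; rw [pderiv_eval0, h3] at h'
    have : μ * (p 1 * p 2) = 0 := by linear_combination -h'
    exact (mul_eq_zero.mp this).resolve_left hμ
  have e1 : p 0 * p 2 = 0 := by
    have h' := h 1; rw [pderiv_eval1, h3] at h'
    have : μ * (p 0 * p 2) = 0 := by linear_combination -h'
    exact (mul_eq_zero.mp this).resolve_left hμ
  have e2 : p 0 * p 1 = 0 := by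
    have h' := h 2; rw [pderiv_eval2, h3] at h'
    have : μ * (p 0 * p 1) = 0 := by linear_combination -h'
    exact (mul_eq_zero.mp this).resolve_left hμ
  rw [eval_hesse] at h0
  by_cases hp0 : p 0 = 0
  · rcases mul_eq_zero.mp e0 with hp1 | hp2
    · have hp2 : p 2 ≠ 0 := fun hh => hp (vec_eq_zero hp0 hp1 hh)
      apply hp2; have : p 2 ^ 3 = 0 := by rw [hp0, hp1] at h0; linear_combination h0
      exact pow_eq_zero_iff (by norm_num) |>.mp this
    · have hp1 : p 1 ≠ 0 := fun hh => hp (vec_eq_zero hp0 hh hp2)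
      apply hp1; have : p 1 ^ 3 = 0 := by rw [hp0, hp2] at h0; linear_combination h0
      exact pow_eq_zero_iff (by norm_num) |>.mp this
  · have hp1 : p 1 = 0 := (mul_eq_zero.mp e2).resolve_left hp0
    have hp2 : p 2 = 0 := (mul_eq_zero.mp e1).resolve_left hp0
    apply hp0; have : p 0 ^ 3 = 0 := by rw [hp1, hp2] at h0; linear_combination h0
    exact pow_eq_zero_iff (by norm_num) |>.mp this

/-- Build the contact data when the restricted polynomial is `X ^ 3`. -/
lemma contact_of_lr_X3 {F : MvPolynomial (Fin 3) K} {a b : Fin 3 → K}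
    (h : lineRestrict F a b = Polynomial.X ^ 3) :
    lineRestrict F a b ≠ 0 ∧ 3 ≤ contactAt F a b := by
  constructor
  · rw [h]; exact pow_ne_zero _ Polynomial.X_ne_zero
  · unfold contactAt; rw [h]
    have : Polynomial.rootMultiplicity (0 : K) (Polynomial.X ^ 3) = 3 := by
      simpa using Polynomial.rootMultiplicity_X_sub_C_pow (0 : K) 3
    omega

/-- In characteristic 3, the restriction is `X^3` when the four coefficient
conditions hold. -/
lemma lr_eq_X3 (μ : K) (h3 : (3 : K) = 0) {a b : Fin 3 → K}
    (h0 : a 0 ^ 3 + a 1 ^ 3 + a 2 ^ 3 - μ * (a 0 * a 1 * a 2) = 0)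
    (h1 : a 1 * a 2 * b 0 + a 0 * a 2 * b 1 + a 0 * a 1 * b 2 = 0)
    (h2 : a 0 * b 1 * b 2 + a 1 * b 0 * b 2 + a 2 * b 0 * b 1 = 0)
    (hc3 : b 0 ^ 3 + b 1 ^ 3 + b 2 ^ 3 - μ * (b 0 * b 1 * b 2) = 1) :
    lineRestrict (hesseCubic μ) a b = Polynomial.X ^ 3 := by
  rw [lr_expand, h0, h1, h2, hc3, h3]
  simp

/-- Extraction of the coefficient conditions from `contact ≥ 3`. -/
lemma contact_conditions (μ : K) (hμ : μ ≠ 0) (h3 : (3 : K) = 0) {a b : Fin 3 → K}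
    (hne : lineRestrict (hesseCubic μ) a b ≠ 0)
    (hc : 3 ≤ contactAt (hesseCubic μ) a b) :
    a 0 ^ 3 + a 1 ^ 3 + a 2 ^ 3 - μ * (a 0 * a 1 * a 2) = 0 ∧
    a 1 * a 2 * b 0 + a 0 * a 2 * b 1 + a 0 * a 1 * b 2 = 0 ∧
    a 0 * b 1 * b 2 + a 1 * b 0 * b 2 + a 2 * b 0 * b 1 = 0 := by
  have hdvd : (Polynomial.X : Polynomial K) ^ 3 ∣ lineRestrict (hesseCubic μ) a b := by
    have := (Polynomial.le_rootMultiplicity_iff hne (a := (0:K)) (n := 3)).mp hc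
    simpa using this
  rw [Polynomial.X_pow_dvd_iff] at hdvd
  have c0 := hdvd 0 (by norm_num)
  have c1 := hdvd 1 (by norm_num)
  have c2 := hdvd 2 (by norm_num)
  rw [lr_expand] at c0 c1 c2
  simp only [Polynomial.coeff_add, Polynomial.coeff_C_mul, Polynomial.coeff_X_pow,
    Polynomial.coeff_X, Polynomial.coeff_C] at c0 c1 c2
  norm_num at c0 c1 c2
  refine ⟨c0, ?_, ?_⟩
  · rw [h3] at c1
    have : μ * (a 1 * a 2 * b 0 + a 0 * a 2 * b 1 + a 0 * a 1 * b 2) = 0 := by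
      linear_combination -c1
    exact (mul_eq_zero.mp this).resolve_left hμ
  · rw [h3] at c2
    have : μ * (a 0 * b 1 * b 2 + a 1 * b 0 * b 2 + a 2 * b 0 * b 1) = 0 := by
      linear_combination -c2
    exact (mul_eq_zero.mp this).resolve_left hμ

end Aux
section Core

variable {K : Type*} [Field K]

lemma pair_absurd {a b : Fin 3 → K} (hind : LinearIndependent K ![a, b]) (s t : K) (ht : t ≠ 0)
    (e0 : s * a 0 + t * b 0 = 0) (e1 : s * a 1 + t * b 1 = 0) (e2 : s * a 2 + t * b 2 = 0) :
    False := by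
  have hz : s • a + t • b = 0 := by
    funext i
    fin_cases i
    · exact e0
    · exact e1
    · exact e2
  exact ht (LinearIndependent.pair_iff.mp hind s t hz).2

lemma pair_left_ne_zero {a b : Fin 3 → K} (hind : LinearIndependent K ![a, b]) : a ≠ 0 := by
  intro h
  have hz : (1 : K) • a + (0 : K) • b = 0 := by simp [h]
  have := (LinearIndependent.pair_iff.mp hind 1 0 hz).1
  norm_num at this

/-- If `a, b` span a line with contact ≥ 3 with the Hesse cubic (char 3), then `a`
is one of the three inflection points and `b` lies on the corresponding line. -/
lemma core (μ : K) (hμ : μ ≠ 0) (h3 : (3 : K) = 0) {a b : Fin 3 → K}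
    (ha : a ≠ 0) (hind : LinearIndependent K ![a, b])
    (h0 : a 0 ^ 3 + a 1 ^ 3 + a 2 ^ 3 - μ * (a 0 * a 1 * a 2) = 0)
    (h1 : a 1 * a 2 * b 0 + a 0 * a 2 * b 1 + a 0 * a 1 * b 2 = 0)
    (h2 : a 0 * b 1 * b 2 + a 1 * b 0 * b 2 + a 2 * b 0 * b 1 = 0) :
    (a 0 ≠ 0 ∧ a 1 = -a 0 ∧ a 2 = 0 ∧ b 2 = 0) ∨
    (a 0 ≠ 0 ∧ a 1 = 0 ∧ a 2 = -a 0 ∧ b 1 = 0) ∨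
    (a 1 ≠ 0 ∧ a 0 = 0 ∧ a 2 = -a 1 ∧ b 0 = 0) := by
  by_cases hs : a 0 + a 1 + a 2 = 0
  · -- the point has a vanishing coordinate
    have hprod : a 0 * a 1 * a 2 = 0 := by
      have hsum : a 0 ^ 3 + a 1 ^ 3 + a 2 ^ 3 = 0 := by
        have hx : (a 0 + a 1 + a 2) ^ 3 = 0 := by rw [hs]; ring
        linear_combination hx - (a 0 ^ 2 * a 1 + a 0 * a 1 ^ 2 + a 0 ^ 2 * a 2
          + a 1 ^ 2 * a 2 + a 0 * a 2 ^ 2 + a 1 * a 2 ^ 2 + 2 * a 0 * a 1 * a 2) * h3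
      have hx : μ * (a 0 * a 1 * a 2) = 0 := by linear_combination hsum - h0
      exact (mul_eq_zero.mp hx).resolve_left hμ
    by_cases h2' : a 2 = 0
    · left
      have ha1 : a 1 = -a 0 := by rw [h2'] at hs; linear_combination hs
      have ha0 : a 0 ≠ 0 := by
        intro hh; exact ha (vec_eq_zero hh (by rw [ha1, hh, neg_zero]) h2')
      refine ⟨ha0, ha1, h2', ?_⟩
      rw [h2', ha1] at h1
      have hx : a 0 * a 0 * b 2 = 0 := by linear_combination -h1
      rcases mul_eq_zero.mp hx with h' | h'
      · exact absurd (mul_self_eq_zero.mp h') ha0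
      · exact h'
    · by_cases h1' : a 1 = 0
      · right; left
        have ha2 : a 2 = -a 0 := by rw [h1'] at hs; linear_combination hs
        have ha0 : a 0 ≠ 0 := by
          intro hh; exact ha (vec_eq_zero hh h1' (by rw [ha2, hh, neg_zero]))
        refine ⟨ha0, h1', ha2, ?_⟩
        rw [h1', ha2] at h1
        have hx : a 0 * a 0 * b 1 = 0 := by linear_combination -h1
        rcases mul_eq_zero.mp hx with h' | h'
        · exact absurd (mul_self_eq_zero.mp h') ha0
        · exact h'
      · right; right
        have h0' : a 0 = 0 := by
          rcases mul_eq_zero.mp hprod with h' | h'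
          · rcases mul_eq_zero.mp h' with h'' | h''
            · exact h''
            · exact absurd h'' h1'
          · exact absurd h' h2'
        have ha2 : a 2 = -a 1 := by rw [h0'] at hs; linear_combination hs
        have ha1 : a 1 ≠ 0 := by
          intro hh; exact ha (vec_eq_zero h0' hh (by rw [ha2, hh, neg_zero]))
        refine ⟨ha1, h0', ha2, ?_⟩
        rw [h0', ha2] at h1
        have hx : a 1 * a 1 * b 0 = 0 := by linear_combination -h1
        rcases mul_eq_zero.mp hx with h' | h'
        · exact absurd (mul_self_eq_zero.mp h') ha1
        · exact h'
  · -- all coordinates nonzero: leads to `b` proportional to `a`, contradiction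
    exfalso
    have hcube : μ * (a 0 * a 1 * a 2) = (a 0 + a 1 + a 2) ^ 3 := by
      linear_combination -h0 - (a 0 ^ 2 * a 1 + a 0 * a 1 ^ 2 + a 0 ^ 2 * a 2
        + a 1 ^ 2 * a 2 + a 0 * a 2 ^ 2 + a 1 * a 2 ^ 2 + 2 * a 0 * a 1 * a 2) * h3
    have hprod : a 0 * a 1 * a 2 ≠ 0 := by
      intro hh
      rw [hh, mul_zero] at hcube
      exact hs (pow_eq_zero_iff (n := 3) (by norm_num) |>.mp hcube.symm)
    have ha0 : a 0 ≠ 0 := fun hh => hprod (by rw [hh]; ring)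
    have ha1 : a 1 ≠ 0 := fun hh => hprod (by rw [hh]; ring)
    have ha2 : a 2 ≠ 0 := fun hh => hprod (by rw [hh]; ring)
    have k1 : (b 0 * a 1 - b 1 * a 0) ^ 2 * a 2 = 0 := by
      linear_combination (b 0 * a 1 + b 1 * a 0) * h1 - (a 0 * a 1) * h2
        - (a 0 * a 1 * a 2 * b 0 * b 1) * h3
    have k2 : (b 0 * a 2 - b 2 * a 0) ^ 2 * a 1 = 0 := by
      linear_combination (b 0 * a 2 + b 2 * a 0) * h1 - (a 0 * a 2) * h2
        - (a 0 * a 1 * a 2 * b 0 * b 2) * h3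
    have e1 : b 1 * a 0 = b 0 * a 1 := by
      rcases mul_eq_zero.mp k1 with h' | h'
      · have hx := pow_eq_zero_iff (n := 2) (by norm_num) |>.mp h'
        linear_combination -hx
      · exact absurd h' ha2
    have e2 : b 2 * a 0 = b 0 * a 2 := by
      rcases mul_eq_zero.mp k2 with h' | h'
      · have hx := pow_eq_zero_iff (n := 2) (by norm_num) |>.mp h'
        linear_combination -hx
      · exact absurd h' ha1
    exact pair_absurd hind (b 0) (-(a 0)) (neg_ne_zero.mpr ha0)
      (by ring) (by linear_combination -e1) (by linear_combination -e2)

end Core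
section Iff

variable {K : Type*} [Field K]

lemma inflPoint_iff (μ : K) (hμ : μ ≠ 0) (h3 : (3 : K) = 0) (p : Fin 3 → K) (hp : p ≠ 0) :
    IsInflPoint (hesseCubic μ) p ↔
      (propor p ![1, -1, 0] ∨ propor p ![1, 0, -1] ∨ propor p ![0, 1, -1]) := by
  constructor
  · rintro ⟨hF0, b, hind, hne, hcon⟩
    obtain ⟨c0, c1, c2⟩ := contact_conditions μ hμ h3 hne hcon
    rcases core μ hμ h3 hp hind c0 c1 c2 with ⟨h0, h1, h2, -⟩ | ⟨h0, h1, h2, -⟩ | ⟨h0, h1, h2, -⟩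
    · exact Or.inl ⟨p 0, h0, by funext i; fin_cases i <;> simp [h1, h2]⟩
    · exact Or.inr (Or.inl ⟨p 0, h0, by funext i; fin_cases i <;> simp [h1, h2]⟩)
    · exact Or.inr (Or.inr ⟨p 1, h0, by funext i; fin_cases i <;> simp [h1, h2]⟩)
  · rintro (⟨c, hc, rfl⟩ | ⟨c, hc, rfl⟩ | ⟨c, hc, rfl⟩)
    · have hX3 : lineRestrict (hesseCubic μ) (c • ![(1:K), -1, 0]) ![1, 0, 0]
          = Polynomial.X ^ 3 := by
        apply lr_eq_X3 μ h3 <;> · simp; try ring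
      obtain ⟨hlr, hct⟩ := contact_of_lr_X3 hX3
      refine ⟨?_, ![1, 0, 0], ?_, hlr, hct⟩
      · rw [eval_hesse]; simp; ring
      · rw [LinearIndependent.pair_iff]
        intro s t hst
        have e1 := congrFun hst 1
        have e0 := congrFun hst 0
        simp at e0 e1
        have hs : s = 0 := by
          rcases e1 with e1 | e1
          · exact e1
          · exact absurd e1 hc
        refine ⟨hs, ?_⟩
        rw [hs] at e0
        simpa using e0
    · have hX3 : lineRestrict (hesseCubic μ) (c • ![(1:K), 0, -1]) ![1, 0, 0]
          = Polynomial.X ^ 3 := by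
        apply lr_eq_X3 μ h3 <;> · simp; try ring
      obtain ⟨hlr, hct⟩ := contact_of_lr_X3 hX3
      refine ⟨?_, ![1, 0, 0], ?_, hlr, hct⟩
      · rw [eval_hesse]; simp; ring
      · rw [LinearIndependent.pair_iff]
        intro s t hst
        have e2 := congrFun hst 2
        have e0 := congrFun hst 0
        simp at e0 e2
        have hs : s = 0 := by
          rcases e2 with e2 | e2
          · exact e2
          · exact absurd e2 hc
        refine ⟨hs, ?_⟩
        rw [hs] at e0
        simpa using e0
    · have hX3 : lineRestrict (hesseCubic μ) (c • ![(0:K), 1, -1]) ![0, 1, 0]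
          = Polynomial.X ^ 3 := by
        apply lr_eq_X3 μ h3 <;> · simp; try ring
      obtain ⟨hlr, hct⟩ := contact_of_lr_X3 hX3
      refine ⟨?_, ![0, 1, 0], ?_, hlr, hct⟩
      · rw [eval_hesse]; simp; ring
      · rw [LinearIndependent.pair_iff]
        intro s t hst
        have e2 := congrFun hst 2
        have e1 := congrFun hst 1
        simp at e1 e2
        have hs : s = 0 := by
          rcases e2 with e2 | e2
          · exact e2
          · exact absurd e2 hc
        refine ⟨hs, ?_⟩
        rw [hs] at e1
        simpa using e1

lemma inflLine_iff (μ : K) (hμ : μ ≠ 0) (h3 : (3 : K) = 0) (w : Fin 3 → K) (hw : w ≠ 0) :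
    IsInflLine (hesseCubic μ) w ↔
      (propor w ![1, 0, 0] ∨ propor w ![0, 1, 0] ∨ propor w ![0, 0, 1]) := by
  constructor
  · rintro ⟨-, a, b, hwa, hwb, hind, hne, hcon⟩
    have ha : a ≠ 0 := pair_left_ne_zero hind
    obtain ⟨c0, c1, c2⟩ := contact_conditions μ hμ h3 hne hcon
    rw [dotv, Fin.sum_univ_three] at hwa hwb
    rcases core μ hμ h3 ha hind c0 c1 c2 with ⟨h0, h1, h2, hb⟩ | ⟨h0, h1, h2, hb⟩ | ⟨h0, h1, h2, hb⟩
    · -- a = (a0, -a0, 0), b 2 = 0 : the line z = 0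
      rw [h1, h2] at hwa
      rw [hb] at hwb
      have hw01 : w 0 = w 1 := by
        have hx : (w 0 - w 1) * a 0 = 0 := by linear_combination hwa
        rcases mul_eq_zero.mp hx with h' | h'
        · linear_combination h'
        · exact absurd h' h0
      have hbsum : b 0 + b 1 ≠ 0 := by
        intro hh
        exact pair_absurd hind (b 0) (-(a 0)) (neg_ne_zero.mpr h0)
          (by ring)
          (by rw [h1]; linear_combination -(a 0) * hh)
          (by rw [h2, hb]; ring)
      have hw0 : w 0 = 0 := by
        rw [← hw01] at hwb
        have hx : w 0 * (b 0 + b 1) = 0 := by linear_combination hwb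
        exact (mul_eq_zero.mp hx).resolve_right hbsum
      have hw1 : w 1 = 0 := by rw [← hw01]; exact hw0
      have hw2 : w 2 ≠ 0 := fun hh => hw (vec_eq_zero hw0 hw1 hh)
      refine Or.inr (Or.inr ⟨w 2, hw2, ?_⟩)
      funext i; fin_cases i <;> simp [hw0, hw1]
    · -- a = (a0, 0, -a0), b 1 = 0 : the line y = 0
      rw [h1, h2] at hwa
      rw [hb] at hwb
      have hw02 : w 0 = w 2 := by
        have hx : (w 0 - w 2) * a 0 = 0 := by linear_combination hwa
        rcases mul_eq_zero.mp hx with h' | h'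
        · linear_combination h'
        · exact absurd h' h0
      have hbsum : b 0 + b 2 ≠ 0 := by
        intro hh
        exact pair_absurd hind (b 0) (-(a 0)) (neg_ne_zero.mpr h0)
          (by ring)
          (by rw [h1, hb]; ring)
          (by rw [h2]; linear_combination -(a 0) * hh)
      have hw0 : w 0 = 0 := by
        rw [← hw02] at hwb
        have hx : w 0 * (b 0 + b 2) = 0 := by linear_combination hwb
        exact (mul_eq_zero.mp hx).resolve_right hbsum
      have hw2 : w 2 = 0 := by rw [← hw02]; exact hw0
      have hw1 : w 1 ≠ 0 := fun hh => hw (vec_eq_zero hw0 hh hw2)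
      refine Or.inr (Or.inl ⟨w 1, hw1, ?_⟩)
      funext i; fin_cases i <;> simp [hw0, hw2]
    · -- a = (0, a1, -a1), b 0 = 0 : the line x = 0
      rw [h1, h2] at hwa
      rw [hb] at hwb
      have hw12 : w 1 = w 2 := by
        have hx : (w 1 - w 2) * a 1 = 0 := by linear_combination hwa
        rcases mul_eq_zero.mp hx with h' | h'
        · linear_combination h'
        · exact absurd h' h0
      have hbsum : b 1 + b 2 ≠ 0 := by
        intro hh
        exact pair_absurd hind (b 1) (-(a 1)) (neg_ne_zero.mpr h0)
          (by rw [h1, hb]; ring)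
          (by ring)
          (by rw [h2]; linear_combination -(a 1) * hh)
      have hw1 : w 1 = 0 := by
        rw [← hw12] at hwb
        have hx : w 1 * (b 1 + b 2) = 0 := by linear_combination hwb
        exact (mul_eq_zero.mp hx).resolve_right hbsum
      have hw2 : w 2 = 0 := by rw [← hw12]; exact hw1
      have hw0 : w 0 ≠ 0 := fun hh => hw (vec_eq_zero hh hw1 hw2)
      refine Or.inl ⟨w 0, hw0, ?_⟩
      funext i; fin_cases i <;> simp [hw1, hw2]
  · rintro (⟨c, hc, rfl⟩ | ⟨c, hc, rfl⟩ | ⟨c, hc, rfl⟩)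
    · -- w ∝ (1,0,0) : the line x = 0, through (0,1,-1) with direction (0,1,0)
      have hX3 : lineRestrict (hesseCubic μ) ![(0:K), 1, -1] ![0, 1, 0]
          = Polynomial.X ^ 3 := by
        apply lr_eq_X3 μ h3 <;> norm_num [Matrix.cons_val_two]
      obtain ⟨hlr, hct⟩ := contact_of_lr_X3 hX3
      refine ⟨fun hh => hc (by simpa using congrFun hh 0), ![0, 1, -1], ![0, 1, 0],
        ?_, ?_, ?_, hlr, hct⟩
      · rw [dotv, Fin.sum_univ_three]; simp
      · rw [dotv, Fin.sum_univ_three]; simp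
      · rw [LinearIndependent.pair_iff]
        intro s t hst
        have e2 := congrFun hst 2
        have e1 := congrFun hst 1
        simp at e1 e2
        exact ⟨e2, by rw [e2] at e1; simpa using e1⟩
    · -- w ∝ (0,1,0) : the line y = 0, through (1,0,-1) with direction (1,0,0)
      have hX3 : lineRestrict (hesseCubic μ) ![(1:K), 0, -1] ![1, 0, 0]
          = Polynomial.X ^ 3 := by
        apply lr_eq_X3 μ h3 <;> norm_num [Matrix.cons_val_two]
      obtain ⟨hlr, hct⟩ := contact_of_lr_X3 hX3
      refine ⟨fun hh => hc (by simpa using congrFun hh 1), ![1, 0, -1], ![1, 0, 0],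
        ?_, ?_, ?_, hlr, hct⟩
      · rw [dotv, Fin.sum_univ_three]; simp
      · rw [dotv, Fin.sum_univ_three]; simp
      · rw [LinearIndependent.pair_iff]
        intro s t hst
        have e2 := congrFun hst 2
        have e0 := congrFun hst 0
        simp at e0 e2
        exact ⟨e2, by rw [e2] at e0; simpa using e0⟩
    · -- w ∝ (0,0,1) : the line z = 0, through (1,-1,0) with direction (1,0,0)
      have hX3 : lineRestrict (hesseCubic μ) ![(1:K), -1, 0] ![1, 0, 0]
          = Polynomial.X ^ 3 := by
        apply lr_eq_X3 μ h3 <;> norm_num [Matrix.cons_val_two]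
      obtain ⟨hlr, hct⟩ := contact_of_lr_X3 hX3
      refine ⟨fun hh => hc (by simpa using congrFun hh 2), ![1, -1, 0], ![1, 0, 0],
        ?_, ?_, ?_, hlr, hct⟩
      · rw [dotv, Fin.sum_univ_three]; simp
      · rw [dotv, Fin.sum_univ_three]; simp
      · rw [LinearIndependent.pair_iff]
        intro s t hst
        have e1 := congrFun hst 1
        have e0 := congrFun hst 0
        simp at e0 e1
        exact ⟨e1, by rw [e1] at e0; simpa using e0⟩

end Iff
lemma bar_hesse (lam : k) :
    bar (hesseCubic lam) = hesseCubic (algebraMap k (AlgebraicClosure k) lam) := by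
  simp only [bar, hesseCubic, map_add, map_sub, map_mul, map_pow,
    MvPolynomial.map_X, MvPolynomial.map_C]

theorem char_three_cubics_share_inflection_data
    (k : Type*) [Field k] [CharP k 3] :
    (∀ lam : k, lam ≠ 0 →
      -- `C_λ` is a smooth plane cubic (geometrically):
      IsSmoothCurve (bar (hesseCubic lam)) 3 ∧
      -- its inflection points are exactly `[1,−1,0], [1,0,−1], [0,1,−1]`:
      (∀ p : Fin 3 → AlgebraicClosure k, p ≠ 0 →
        (IsInflPoint (bar (hesseCubic lam)) p ↔
          (propor p ![1, -1, 0] ∨ propor p ![1, 0, -1] ∨ propor p ![0, 1, -1]))) ∧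
      -- its inflection lines are exactly the lines `x = 0`, `y = 0`, `z = 0`:
      (∀ w : Fin 3 → AlgebraicClosure k, w ≠ 0 →
        (IsInflLine (bar (hesseCubic lam)) w ↔
          (propor w ![1, 0, 0] ∨ propor w ![0, 1, 0] ∨ propor w ![0, 0, 1])))) ∧
    -- in particular distinct members of the family are distinct curves sharing all
    -- their inflection points and inflection lines, so a smooth plane cubic cannot be
    -- recovered from these data in characteristic 3:
    (∀ lam₁ lam₂ : k, lam₁ ≠ 0 → lam₂ ≠ 0 → lam₁ ≠ lam₂ →
      ¬ ∃ c : k, hesseCubic lam₂ = c • hesseCubic lam₁) := by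
  have h3k : (3 : k) = 0 := by
    have := CharP.cast_eq_zero k 3
    exact_mod_cast this
  constructor
  · intro lam hlam
    haveI : CharP (AlgebraicClosure k) 3 :=
      charP_of_injective_algebraMap (algebraMap k (AlgebraicClosure k)).injective 3
    have h3 : (3 : AlgebraicClosure k) = 0 := by
      have := CharP.cast_eq_zero (AlgebraicClosure k) 3
      exact_mod_cast this
    set μ : AlgebraicClosure k := algebraMap k (AlgebraicClosure k) lam with hμdef
    have hμ : μ ≠ 0 := by
      intro h
      apply hlam
      apply (algebraMap k (AlgebraicClosure k)).injective
      rw [map_zero]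
      exact h
    rw [bar_hesse]
    exact ⟨hesse_smooth μ hμ h3,
      fun p hp => inflPoint_iff μ hμ h3 p hp,
      fun w hw => inflLine_iff μ hμ h3 w hw⟩
  · rintro lam₁ lam₂ h1 h2 hne ⟨c, hc⟩
    rw [MvPolynomial.smul_eq_C_mul] at hc
    have E1 := congrArg (MvPolynomial.eval ![(1:k), 0, 0]) hc
    have E2 := congrArg (MvPolynomial.eval ![(1:k), 1, 1]) hc
    rw [MvPolynomial.eval_mul, MvPolynomial.eval_C, eval_hesse, eval_hesse] at E1 E2
    simp only [Matrix.cons_val_zero, Matrix.cons_val_one, Matrix.head_cons, Matrix.cons_val_two, Matrix.tail_cons] at E1 E2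
    norm_num at E1 E2
    -- E1 : 1 = c, E2 : 3 - lam₂ = c * (3 - lam₁)
    apply hne
    rw [← E1, one_mul] at E2
    rw [h3k] at E2
    linear_combination E2

end Infl
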